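/- (Welfare suboptimality.) Consider an LQ network game satisfying the contraction assumption with β ≠ 0, and let a^opt := (I − γ(G + Gᵀ))^{-1} β (the unique maximizer of SW over 𝒜) and a^α := (I − (γ/2)(G + Gᵀ))^{-1} β (the unique maximizer over 𝒜 of the function φ(a) = −(1/2) Σ_i a_i² + Σ_i β_i a_i + (γ/2) Σ_i (Σ_j G_ij a_j) a_i). Then SW(a^α) > 0 and SW(a^opt)/SW(a^α) ≤ (1 − λ_min(γ(G + Gᵀ))) · (1 − λ_min(γ(G + Gᵀ))/2)² / (1 − λ_max(γ(G + Gᵀ)))² ≤ (1 + |γ| · max_i (Σ_{j≠i} |G_ij| + Σ_{j≠i} |G_ji|))³ / (1 − |γ| · max_i (Σ_{j≠i} |G_ij| + Σ_{j≠i} |G_ji|))² ≤ (1 + 2|γ|)³ / (1 − 2|γ|)². -/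

import Mathlib

open Matrix

open Matrix

private lemma eig_abs_le' {n : ℕ} {S : Matrix (Fin n) (Fin n) ℝ} (hS : S.IsHermitian)
    (hsym : ∀ p q, |S p q| = |S q p|) (ρ : ℝ) (hrow : ∀ p, ∑ q, |S p q| ≤ ρ) (i : Fin n) :
    |hS.eigenvalues i| ≤ ρ := by
  have hv1 : ∑ p, hS.eigenvectorBasis i p * hS.eigenvectorBasis i p = 1 := by
    have h := hS.eigenvectorBasis.orthonormal.1 i
    have h2 : (inner ℝ (hS.eigenvectorBasis i) (hS.eigenvectorBasis i) : ℝ) = 1 := by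
      rw [real_inner_self_eq_norm_sq, h]; norm_num
    rw [← h2, PiLp.inner_apply]
    simp [RCLike.inner_apply, sq]
  set v : Fin n → ℝ := fun p => hS.eigenvectorBasis i p with hvdef
  have heig : hS.eigenvalues i = ∑ p, ∑ q, v p * (S p q * v q) := by
    have := hS.eigenvalues_eq i
    simpa [dotProduct, mulVec, Finset.mul_sum] using this
  have hA : |hS.eigenvalues i| ≤ ∑ p, ∑ q, |S p q| * (|v p| * |v q|) := by
    rw [heig]
    refine le_trans (Finset.abs_sum_le_sum_abs _ _) (Finset.sum_le_sum fun p _ => ?_)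
    refine le_trans (Finset.abs_sum_le_sum_abs _ _) (Finset.sum_le_sum fun q _ => le_of_eq ?_)
    rw [abs_mul, abs_mul]; ring
  have hB : 2 * (∑ p, ∑ q, |S p q| * (|v p| * |v q|))
      ≤ ∑ p, ∑ q, (|S p q| * v p ^ 2 + |S p q| * v q ^ 2) := by
    rw [Finset.mul_sum]
    refine Finset.sum_le_sum fun p _ => ?_
    rw [Finset.mul_sum]
    refine Finset.sum_le_sum fun q _ => ?_
    nlinarith [sq_nonneg (|v p| - |v q|), sq_abs (v p), sq_abs (v q), abs_nonneg (S p q),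
      abs_nonneg (v p), abs_nonneg (v q)]
  have hswap : ∑ p, ∑ q, |S p q| * v q ^ 2 = ∑ p, ∑ q, |S p q| * v p ^ 2 := by
    rw [Finset.sum_comm]
    exact Finset.sum_congr rfl fun p _ => Finset.sum_congr rfl fun q _ => by rw [hsym]
  have hC : ∑ p, ∑ q, (|S p q| * v p ^ 2 + |S p q| * v q ^ 2)
      = 2 * ∑ p, (∑ q, |S p q|) * v p ^ 2 := by
    simp only [Finset.sum_add_distrib]
    rw [hswap, ← Finset.sum_add_distrib, Finset.mul_sum]
    refine Finset.sum_congr rfl fun p _ => ?_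
    rw [Finset.sum_mul]
    ring
  have hD : ∑ p, (∑ q, |S p q|) * v p ^ 2 ≤ ρ := by
    have hvsq : ∑ p, v p ^ 2 = 1 := by
      rw [← hv1]; exact Finset.sum_congr rfl fun p _ => by rw [sq]
    calc ∑ p, (∑ q, |S p q|) * v p ^ 2 ≤ ∑ p, ρ * v p ^ 2 :=
          Finset.sum_le_sum fun p _ => mul_le_mul_of_nonneg_right (hrow p) (sq_nonneg _)
      _ = ρ := by rw [← Finset.mul_sum, hvsq, mul_one]
  linarith

private lemma term1' {c lam : ℝ} (h : 1 - lam ≠ 0) :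
    c * ((1 - lam)⁻¹ * c) - (1/2)*(((1 - lam)⁻¹ * c) * ((1 - lam) * ((1 - lam)⁻¹ * c)))
    = (1/2)*(c^2*(1 - lam)⁻¹) := by field_simp; ring

private lemma term2' {c lam : ℝ} (h : 1 - lam/2 ≠ 0) :
    c * ((1 - lam/2)⁻¹ * c) - (1/2)*(((1 - lam/2)⁻¹ * c) * ((1 - lam) * ((1 - lam/2)⁻¹ * c)))
    = (1/2)*(c^2*((1 - lam/2)⁻¹)^2) := by
  have e : (1:ℝ) - lam = 2*(1 - lam/2) - 1 := by ring
  rw [e]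
  generalize 1 - lam/2 = B at h ⊢
  field_simp
  ring

private lemma key_ineq' {A B la lb : ℝ} (hla : 0 < la) (h1 : la ≤ A) (hB : 0 < B)
    (h2 : B ≤ lb) : A⁻¹ ≤ lb ^ 2 / la * (B⁻¹) ^ 2 := by
  have hA : 0 < A := lt_of_lt_of_le hla h1
  have hlb : 0 < lb := lt_of_lt_of_le hB h2
  have e1 : A⁻¹ ≤ la⁻¹ := by gcongr
  have e2 : (lb⁻¹) ^ 2 ≤ (B⁻¹) ^ 2 := by gcongr
  calc A⁻¹ ≤ la⁻¹ := e1
    _ = lb ^ 2 / la * (lb⁻¹) ^ 2 := by field_simp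
    _ ≤ lb ^ 2 / la * (B⁻¹) ^ 2 := by
        exact mul_le_mul_of_nonneg_left e2 (by positivity)

set_option maxHeartbeats 1000000 in
/-- **Welfare suboptimality.** In an LQ network game satisfying the contraction assumption with
`β ≠ 0`, let `a^opt := (I − γ(G + Gᵀ))⁻¹ β` (the unique maximizer of `SW` over `𝒜`) and
`a^α := (I − (γ/2)(G + Gᵀ))⁻¹ β` (the unique maximizer of the `α`-potential function over `𝒜`).
Then `SW(a^α) > 0` and
`SW(a^opt)/SW(a^α) ≤ (1 − λ_min)·(1 − λ_min/2)²/(1 − λ_max)²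
  ≤ (1 + |γ|·max_i(Σ_{j≠i}|G_ij| + Σ_{j≠i}|G_ji|))³ / (1 − |γ|·max_i(Σ_{j≠i}|G_ij| + Σ_{j≠i}|G_ji|))²
  ≤ (1 + 2|γ|)³/(1 − 2|γ|)²`,
where `λ_min, λ_max` are the extreme eigenvalues of `γ(G + Gᵀ)`. -/
theorem welfare_suboptimality
    {N : ℕ} (hN : 0 < N)
    (G : Matrix (Fin N) (Fin N) ℝ)
    (hdiag : ∀ i, G i i = 0)
    (hGsmall : ∀ i j, |G i j| ≤ 1 / (N : ℝ))
    (γ : ℝ) (hγ : |γ| < 1 / 2)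
    (β : Fin N → ℝ) (hβne : β ≠ 0)
    (lo hi : Fin N → ℝ) (hlohi : ∀ i, lo i ≤ hi i)
    (A : Set (Fin N → ℝ)) (hA : A = Set.univ.pi fun i => Set.Icc (lo i) (hi i))
    (atil : ℝ) (hatil : 0 ≤ atil)
    (hsub : ∀ i, Set.Icc (-atil) atil ⊆ Set.Icc (lo i) (hi i))
    (hβ : ∀ i, |β i| ≤ (1 - 2 * |γ|) * atil)
    (u : Fin N → (Fin N → ℝ) → ℝ)
    (hu : ∀ i a, u i a = -(1/2) * a i ^ 2 + β i * a i + γ * (∑ j, G i j * a j) * a i)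
    (SW : (Fin N → ℝ) → ℝ) (hSW : ∀ a, SW a = ∑ i, u i a)
    (aopt : Fin N → ℝ) (haopt : aopt = (1 - γ • (G + Gᵀ))⁻¹ *ᵥ β)
    (aα : Fin N → ℝ) (haα : aα = (1 - (γ / 2) • (G + Gᵀ))⁻¹ *ᵥ β)
    (hS : (γ • (G + Gᵀ)).IsHermitian)
    (lmin lmax : ℝ) (hlmin : lmin = ⨅ i, hS.eigenvalues i)
    (hlmax : lmax = ⨆ i, hS.eigenvalues i)
    (m : ℝ)
    (hm : m = ⨆ i : Fin N,
      ((∑ j ∈ Finset.univ.erase i, |G i j|) + ∑ j ∈ Finset.univ.erase i, |G j i|)) :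
    0 < SW aα ∧
    SW aopt / SW aα ≤ (1 - lmin) * (1 - lmin / 2) ^ 2 / (1 - lmax) ^ 2 ∧
    (1 - lmin) * (1 - lmin / 2) ^ 2 / (1 - lmax) ^ 2
      ≤ (1 + |γ| * m) ^ 3 / (1 - |γ| * m) ^ 2 ∧
    (1 + |γ| * m) ^ 3 / (1 - |γ| * m) ^ 2 ≤ (1 + 2 * |γ|) ^ 3 / (1 - 2 * |γ|) ^ 2 := by
  haveI : Nonempty (Fin N) := Fin.pos_iff_nonempty.mp hN
  -- SW as quadratic form
  have hSW' : ∀ a : Fin N → ℝ, SW a = β ⬝ᵥ a - (1/2) * (a ⬝ᵥ ((1 - γ • (G + Gᵀ)) *ᵥ a)) := by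
    intro a
    have hGt : a ⬝ᵥ (Gᵀ *ᵥ a) = a ⬝ᵥ (G *ᵥ a) := by
      rw [mulVec_transpose, dotProduct_comm, ← dotProduct_mulVec]
    rw [hSW]
    rw [sub_mulVec, one_mulVec, dotProduct_sub, smul_mulVec, dotProduct_smul,
      add_mulVec, dotProduct_add, hGt]
    simp only [hu, smul_eq_mul, dotProduct]
    rw [Finset.sum_add_distrib, Finset.sum_add_distrib]
    simp only [mulVec, dotProduct, Finset.mul_sum]
    ring_nf
    have e1 : ∑ x, a x ^ 2 * (-1/2 : ℝ) = (∑ i, a i * a i) * (-1/2) := by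
      rw [Finset.sum_mul]
      exact Finset.sum_congr rfl fun x _ => by ring
    have e2 : ∑ x, (∑ j, γ * G x j * a j) * a x = γ * ∑ x, ∑ j, a x * G x j * a j := by
      rw [Finset.mul_sum]
      refine Finset.sum_congr rfl fun x _ => ?_
      rw [Finset.sum_mul, Finset.mul_sum]
      exact Finset.sum_congr rfl fun j _ => by ring
    rw [e1, e2]
    ring
  -- bounds on m
  have hbdd : ∀ f : Fin N → ℝ, BddAbove (Set.range f) := fun f => (Set.finite_range f).bddAbove
  have hmterm : ∀ p : Fin N,
      ((∑ j ∈ Finset.univ.erase p, |G p j|) + ∑ j ∈ Finset.univ.erase p, |G j p|) ≤ m := by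
    intro p; rw [hm]
    exact le_ciSup (f := fun i : Fin N =>
      ((∑ j ∈ Finset.univ.erase i, |G i j|) + ∑ j ∈ Finset.univ.erase i, |G j i|)) (hbdd _) p
  have hm0 : 0 ≤ m := by
    refine le_trans ?_ (hmterm ⟨0, hN⟩)
    positivity
  have herase_le : ∀ (f : Fin N → ℝ) (i : Fin N), (∀ j, |f j| ≤ 1 / (N:ℝ)) →
      ∑ j ∈ Finset.univ.erase i, |f j| ≤ 1 := by
    intro f i hf
    have hN' : (0:ℝ) < N := by exact_mod_cast hN
    calc ∑ j ∈ Finset.univ.erase i, |f j| ≤ ∑ _j ∈ Finset.univ.erase i, (1/(N:ℝ)) :=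
          Finset.sum_le_sum fun j _ => hf j
      _ = ((N - 1 : ℕ) : ℝ) * (1/(N:ℝ)) := by
          rw [Finset.sum_const, Finset.card_erase_of_mem (Finset.mem_univ i),
            Finset.card_univ, Fintype.card_fin, nsmul_eq_mul]
      _ ≤ (N:ℝ) * (1/(N:ℝ)) := by
          have : ((N - 1 : ℕ) : ℝ) ≤ (N:ℝ) := by exact_mod_cast Nat.sub_le N 1
          exact mul_le_mul_of_nonneg_right this (by positivity)
      _ = 1 := by field_simp
  have hm2 : m ≤ 2 := by
    rw [hm]
    refine ciSup_le fun i => ?_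
    have h1 : ∑ j ∈ Finset.univ.erase i, |G i j| ≤ 1 :=
      herase_le (fun j => G i j) i (fun j => hGsmall i j)
    have h2 : ∑ j ∈ Finset.univ.erase i, |G j i| ≤ 1 :=
      herase_le (fun j => G j i) i (fun j => hGsmall j i)
    linarith
  -- eigenvalue bounds
  set ρ : ℝ := |γ| * m with hρdef
  have hρ0 : 0 ≤ ρ := mul_nonneg (abs_nonneg γ) hm0
  have h2γ : 2 * |γ| < 1 := by linarith
  have hρ2γ : ρ ≤ 2 * |γ| := by
    calc ρ = |γ| * m := rfl
      _ ≤ |γ| * 2 := mul_le_mul_of_nonneg_left hm2 (abs_nonneg γ)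
      _ = 2 * |γ| := by ring
  have hρ1 : ρ < 1 := lt_of_le_of_lt hρ2γ h2γ
  have hSpq : ∀ p q, (γ • (G + Gᵀ)) p q = γ * (G p q + G q p) := by
    intro p q
    simp [Matrix.smul_apply, Matrix.add_apply, Matrix.transpose_apply, smul_eq_mul]
  have hsym : ∀ p q, |(γ • (G + Gᵀ)) p q| = |(γ • (G + Gᵀ)) q p| := by
    intro p q; rw [hSpq, hSpq]; congr 1; ring
  have hrow : ∀ p, ∑ q, |(γ • (G + Gᵀ)) p q| ≤ ρ := by
    intro p
    have step1 : ∑ q, |(γ • (G + Gᵀ)) p q| = |γ| * ∑ q, |G p q + G q p| := by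
      rw [Finset.mul_sum]
      exact Finset.sum_congr rfl fun q _ => by rw [hSpq, abs_mul]
    have step2 : ∑ q, |G p q + G q p|
        ≤ (∑ j ∈ Finset.univ.erase p, |G p j|) + ∑ j ∈ Finset.univ.erase p, |G j p| := by
      calc ∑ q, |G p q + G q p| ≤ ∑ q, (|G p q| + |G q p|) :=
            Finset.sum_le_sum fun q _ => abs_add_le _ _
        _ = ∑ q ∈ Finset.univ.erase p, (|G p q| + |G q p|) := by
            rw [← Finset.sum_erase_add Finset.univ _ (Finset.mem_univ p)]
            simp [hdiag p]
        _ = _ := Finset.sum_add_distrib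
    rw [step1]
    calc |γ| * ∑ q, |G p q + G q p|
        ≤ |γ| * ((∑ j ∈ Finset.univ.erase p, |G p j|) + ∑ j ∈ Finset.univ.erase p, |G j p|) :=
          mul_le_mul_of_nonneg_left step2 (abs_nonneg γ)
      _ ≤ |γ| * m := mul_le_mul_of_nonneg_left (hmterm p) (abs_nonneg γ)
  have habs : ∀ i, |hS.eigenvalues i| ≤ ρ := eig_abs_le' hS hsym ρ hrow
  have hlam_lt1 : ∀ i, hS.eigenvalues i < 1 := fun i =>
    lt_of_le_of_lt (le_trans (le_abs_self _) (habs i)) hρ1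
  have hlam_gt : ∀ i, -1 < hS.eigenvalues i := fun i => by
    have := (abs_le.mp (habs i)).1; linarith
  have hlmax_le : lmax ≤ ρ := by
    rw [hlmax]; exact ciSup_le fun i => (abs_le.mp (habs i)).2
  have hlmin_ge : -ρ ≤ lmin := by
    rw [hlmin]; exact le_ciInf fun i => (abs_le.mp (habs i)).1
  have hlam_le_lmax : ∀ i, hS.eigenvalues i ≤ lmax := fun i => by
    rw [hlmax]; exact le_ciSup (hbdd _) i
  have hlmin_le_lam : ∀ i, lmin ≤ hS.eigenvalues i := fun i => by
    rw [hlmin]; exact ciInf_le (Set.finite_range _).bddBelow i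
  have hlmax1 : lmax < 1 := lt_of_le_of_lt hlmax_le hρ1
  have hlmin1 : lmin < 1 := lt_of_le_of_lt (le_trans (hlmin_le_lam ⟨0, hN⟩) (hlam_le_lmax _)) hlmax1
  have hminmax : lmin ≤ lmax := le_trans (hlmin_le_lam ⟨0, hN⟩) (hlam_le_lmax _)
  -- spectral decomposition
  set U : Matrix (Fin N) (Fin N) ℝ := (hS.eigenvectorUnitary : Matrix (Fin N) (Fin N) ℝ)
    with hUdef
  have hU1 : U * star U = 1 := hS.eigenvectorUnitary.prop.2
  have hU2 : star U * U = 1 := hS.eigenvectorUnitary.prop.1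
  have hofReal : (RCLike.ofReal ∘ hS.eigenvalues : Fin N → ℝ) = hS.eigenvalues := by ext i; simp
  have hspec : γ • (G + Gᵀ) = U * diagonal hS.eigenvalues * star U := by
    have := hS.spectral_theorem
    rwa [hofReal] at this
  have hAi : ∀ i, (0:ℝ) < 1 - hS.eigenvalues i := fun i => by have := hlam_lt1 i; linarith
  have hBi : ∀ i, (0:ℝ) < 1 - hS.eigenvalues i / 2 := fun i => by have := hlam_lt1 i; linarith
  have hP : 1 - γ • (G + Gᵀ) = U * diagonal (fun i => 1 - hS.eigenvalues i) * star U := by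
    have e : (diagonal (fun i => 1 - hS.eigenvalues i) : Matrix (Fin N) (Fin N) ℝ)
        = 1 - diagonal hS.eigenvalues := by rw [← diagonal_one, ← diagonal_sub]
    rw [e, mul_sub, sub_mul, mul_one, hU1, ← hspec]
  have hQ : 1 - (γ/2) • (G + Gᵀ) = U * diagonal (fun i => 1 - hS.eigenvalues i / 2) * star U := by
    have e0 : (γ/2) • (G + Gᵀ) = U * diagonal (fun i => hS.eigenvalues i / 2) * star U := by
      have e1 : (γ/2) • (G + Gᵀ) = (1/2 : ℝ) • (γ • (G + Gᵀ)) := by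
        rw [smul_smul]; congr 1; ring
      have e2 : (diagonal (fun i => hS.eigenvalues i / 2) : Matrix (Fin N) (Fin N) ℝ)
          = (1/2 : ℝ) • diagonal hS.eigenvalues := by
        have e3 : (fun i => hS.eigenvalues i / 2) = (1/2 : ℝ) • hS.eigenvalues := by
          funext i; simp; ring
        rw [e3, diagonal_smul]
      rw [e1, e2, Matrix.mul_smul, Matrix.smul_mul, ← hspec]
    have e : (diagonal (fun i => 1 - hS.eigenvalues i / 2) : Matrix (Fin N) (Fin N) ℝ)
        = 1 - diagonal (fun i => hS.eigenvalues i / 2) := by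
      rw [← diagonal_one, ← diagonal_sub]
    rw [e, mul_sub, sub_mul, mul_one, hU1, ← e0]
  -- inverses
  have hinv : ∀ d : Fin N → ℝ, (∀ i, d i ≠ 0) →
      (U * diagonal d * star U)⁻¹ = U * diagonal (fun i => (d i)⁻¹) * star U := by
    intro d hd
    apply inv_eq_right_inv
    have e : U * diagonal d * star U * (U * diagonal (fun i => (d i)⁻¹) * star U)
        = U * (diagonal d * (star U * U) * diagonal (fun i => (d i)⁻¹)) * star U := by
      noncomm_ring
    rw [e, hU2, mul_one, diagonal_mul_diagonal]
    have e2 : (fun i => d i * (d i)⁻¹) = fun _ => (1:ℝ) := by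
      ext i; exact mul_inv_cancel₀ (hd i)
    rw [e2, diagonal_one, mul_one, hU1]
  set c : Fin N → ℝ := star U *ᵥ β with hcdef
  have hβc : β = U *ᵥ c := by
    rw [hcdef, mulVec_mulVec, hU1, one_mulVec]
  have hUUvec : ∀ x : Fin N → ℝ, star U *ᵥ (U *ᵥ x) = x := fun x => by
    rw [mulVec_mulVec, hU2, one_mulVec]
  have hdotU : ∀ x y : Fin N → ℝ, (U *ᵥ x) ⬝ᵥ (U *ᵥ y) = x ⬝ᵥ y := by
    intro x y
    rw [dotProduct_mulVec]
    have : (U *ᵥ x) ᵥ* U = star U *ᵥ (U *ᵥ x) := by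
      rw [star_eq_conjTranspose, conjTranspose_eq_transpose_of_trivial, mulVec_transpose]
    rw [this, hUUvec]
  -- coordinates of aopt and aα
  have haopt2 : aopt = U *ᵥ (diagonal (fun i => (1 - hS.eigenvalues i)⁻¹) *ᵥ c) := by
    rw [haopt, hP, hinv _ (fun i => ne_of_gt (hAi i)), ← mulVec_mulVec, ← mulVec_mulVec, hcdef]
  have haα2 : aα = U *ᵥ (diagonal (fun i => (1 - hS.eigenvalues i / 2)⁻¹) *ᵥ c) := by
    rw [haα, hQ, hinv _ (fun i => ne_of_gt (hBi i)), ← mulVec_mulVec, ← mulVec_mulVec, hcdef]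
  -- value of SW at a point of the form U *ᵥ z
  have hSWU : ∀ z : Fin N → ℝ, SW (U *ᵥ z)
      = ∑ i, (c i * z i - (1/2) * (z i * ((1 - hS.eigenvalues i) * z i))) := by
    intro z
    rw [hSW' (U *ᵥ z), hP, ← mulVec_mulVec, ← mulVec_mulVec, hUUvec, hβc, hdotU, hdotU]
    rw [dotProduct, dotProduct, Finset.mul_sum, ← Finset.sum_sub_distrib]
    exact Finset.sum_congr rfl fun i _ => by rw [mulVec_diagonal]
  have hSWopt : SW aopt = (1/2) * ∑ i, (c i)^2 * (1 - hS.eigenvalues i)⁻¹ := by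
    rw [haopt2, hSWU, Finset.mul_sum]
    refine Finset.sum_congr rfl fun i _ => ?_
    rw [mulVec_diagonal]
    exact term1' (ne_of_gt (hAi i))
  have hSWα : SW aα = (1/2) * ∑ i, (c i)^2 * ((1 - hS.eigenvalues i / 2)⁻¹)^2 := by
    rw [haα2, hSWU, Finset.mul_sum]
    refine Finset.sum_congr rfl fun i _ => ?_
    rw [mulVec_diagonal]
    exact term2' (ne_of_gt (hBi i))
  -- positivity of SW aα
  have hcne : c ≠ 0 := by
    intro h
    apply hβne
    rw [hβc, h, mulVec_zero]
  obtain ⟨i0, hi0⟩ := Function.ne_iff.mp hcne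
  have hposα : 0 < SW aα := by
    rw [hSWα]
    have hterm : ∀ i ∈ Finset.univ, (0:ℝ) ≤ (c i)^2 * ((1 - hS.eigenvalues i / 2)⁻¹)^2 :=
      fun i _ => by positivity
    have hterm0 : (0:ℝ) < (c i0)^2 * ((1 - hS.eigenvalues i0 / 2)⁻¹)^2 := by
      have h1 : (0:ℝ) < (c i0)^2 := pow_two_pos_of_ne_zero hi0
      have h2 : (0:ℝ) < ((1 - hS.eigenvalues i0 / 2)⁻¹)^2 := by
        have := hBi i0; positivity
      exact mul_pos h1 h2
    have := Finset.sum_pos' hterm ⟨i0, Finset.mem_univ i0, hterm0⟩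
    linarith
  refine ⟨hposα, ?_, ?_, ?_⟩
  · -- main suboptimality bound
    rw [div_le_iff₀ hposα]
    have hKterm : ∀ i, (c i)^2 * (1 - hS.eigenvalues i)⁻¹
        ≤ (1 - lmin/2)^2 / (1 - lmax) * ((c i)^2 * ((1 - hS.eigenvalues i / 2)⁻¹)^2) := by
      intro i
      have hk := key_ineq' (A := 1 - hS.eigenvalues i) (B := 1 - hS.eigenvalues i / 2)
        (la := 1 - lmax) (lb := 1 - lmin/2) (by linarith) (by have := hlam_le_lmax i; linarith)
        (hBi i) (by have := hlmin_le_lam i; linarith)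
      calc (c i)^2 * (1 - hS.eigenvalues i)⁻¹
          ≤ (c i)^2 * ((1 - lmin/2)^2 / (1 - lmax) * ((1 - hS.eigenvalues i / 2)⁻¹)^2) :=
            mul_le_mul_of_nonneg_left hk (sq_nonneg _)
        _ = (1 - lmin/2)^2 / (1 - lmax) * ((c i)^2 * ((1 - hS.eigenvalues i / 2)⁻¹)^2) := by
            ring
    have hstep : SW aopt ≤ (1 - lmin/2)^2 / (1 - lmax) * SW aα := by
      rw [hSWopt, hSWα]
      calc (1/2) * ∑ i, (c i)^2 * (1 - hS.eigenvalues i)⁻¹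
          ≤ (1/2) * ∑ i, (1 - lmin/2)^2 / (1 - lmax)
              * ((c i)^2 * ((1 - hS.eigenvalues i / 2)⁻¹)^2) := by
            have := Finset.sum_le_sum (fun i (_ : i ∈ Finset.univ) => hKterm i)
            linarith
        _ = (1 - lmin/2)^2 / (1 - lmax)
              * ((1/2) * ∑ i, (c i)^2 * ((1 - hS.eigenvalues i / 2)⁻¹)^2) := by
            rw [← Finset.mul_sum]; ring
    have hKK : (1 - lmin/2)^2 / (1 - lmax)
        ≤ (1 - lmin) * (1 - lmin/2)^2 / (1 - lmax)^2 := by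
      rw [div_le_div_iff₀ (by linarith) (pow_pos (by linarith : (0:ℝ) < 1 - lmax) 2)]
      have hle : (1 - lmax) ≤ (1 - lmin) := by linarith
      have hnn : (0:ℝ) ≤ (1 - lmin/2)^2 * (1 - lmax) :=
        mul_nonneg (sq_nonneg _) (by linarith)
      calc (1 - lmin/2)^2 * (1 - lmax)^2 = ((1 - lmin/2)^2 * (1 - lmax)) * (1 - lmax) := by
            ring
        _ ≤ ((1 - lmin/2)^2 * (1 - lmax)) * (1 - lmin) := mul_le_mul_of_nonneg_left hle hnn
        _ = (1 - lmin) * (1 - lmin/2)^2 * (1 - lmax) := by ring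
    calc SW aopt ≤ (1 - lmin/2)^2 / (1 - lmax) * SW aα := hstep
      _ ≤ (1 - lmin) * (1 - lmin/2)^2 / (1 - lmax)^2 * SW aα :=
          mul_le_mul_of_nonneg_right hKK hposα.le
  · -- second bound
    have hminρ : -ρ ≤ lmin := hlmin_ge
    have h1 : (1 - lmin) * (1 - lmin/2)^2 ≤ (1 + ρ)^3 := by
      have ha : 1 - lmin ≤ 1 + ρ := by linarith
      have hb : 0 ≤ 1 - lmin/2 := by linarith
      have hc' : 1 - lmin/2 ≤ 1 + ρ := by linarith
      have hd : (1 - lmin/2)^2 ≤ (1 + ρ)^2 := pow_le_pow_left₀ hb hc' 2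
      nlinarith [sq_nonneg (1 - lmin/2)]
    have h2 : (1 - ρ)^2 ≤ (1 - lmax)^2 :=
      pow_le_pow_left₀ (by linarith) (by linarith) 2
    exact div_le_div₀ (by positivity) h1 (pow_pos (by linarith) 2) h2
  · -- third bound
    have h1 : (1 + ρ)^3 ≤ (1 + 2*|γ|)^3 := pow_le_pow_left₀ (by linarith) (by linarith) 3
    have h2 : (1 - 2*|γ|)^2 ≤ (1 - ρ)^2 := pow_le_pow_left₀ (by linarith) (by linarith) 2
    have hpos : (0:ℝ) < (1 - 2*|γ|)^2 := pow_pos (by linarith) 2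
    have hnn : (0:ℝ) ≤ (1 + 2*|γ|)^3 := by positivity
    exact div_le_div₀ hnn h1 hpos h2
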